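/- Let α, β be real numbers with 0 < β < α ≤ 1 and let 0 < θ < π. Define N(θ) = sin((−θ(α−3) + πα)/2) + (α−1)·sin((θ + πα − θα)/2) and D(θ) = sin((−θ(β−3) + πβ)/2) + (β−1)·sin((θ + πβ − θβ)/2). If D(θ) ≠ 0, then for a real parameter a the cusp equation G(θ) = 0 holds if and only if a = −2^{α−β}·(sin(θ/2))^{α−β}·N(θ)/D(θ). In other words, the third bifurcation value is a₃ = −2^{α−β}·(sin(θ/2))^{α−β}·[sin((−θ(α−3)+πα)/2) + (α−1)·sin((θ+πα−θα)/2)] / [sin((−θ(β−3)+πβ)/2) + (β−1)·sin((θ+πβ−θβ)/2)]. -/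

import Mathlib

/-- G(θ) = γ₂'(θ), the derivative of the imaginary part of the boundary curve. -/
noncomputable def G (a α β θ : ℝ) : ℝ :=
  (2 : ℝ) ^ α * (1 - α / 2) * Real.cos (α * (Real.pi - θ) / 2 + θ) * Real.sin (θ / 2) ^ α
    + (2 : ℝ) ^ β * a * (1 - β / 2) * Real.cos (β * (Real.pi - θ) / 2 + θ) * Real.sin (θ / 2) ^ β
    + (2 : ℝ) ^ (α - 1) * α * Real.cos (θ / 2) * Real.sin (θ / 2) ^ (α - 1) *
        Real.sin (α * (Real.pi - θ) / 2 + θ)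
    + (2 : ℝ) ^ (β - 1) * a * β * Real.cos (θ / 2) * Real.sin (θ / 2) ^ (β - 1) *
        Real.sin (β * (Real.pi - θ) / 2 + θ)

/-- For 0 < θ < π, provided the denominator D(θ) ≠ 0, the cusp equation G(θ) = 0
holds if and only if a has the value a₃ given in the paper. -/
theorem third_bifurcation_value (α β θ a : ℝ)
    (hβ : 0 < β) (hβα : β < α) (hα : α ≤ 1) (h0 : 0 < θ) (hπ : θ < Real.pi)
    (hD : Real.sin ((-(θ * (β - 3)) + Real.pi * β) / 2)
        + (β - 1) * Real.sin ((θ + Real.pi * β - θ * β) / 2) ≠ 0) :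
    G a α β θ = 0 ↔
      a = -(2 : ℝ) ^ (α - β) * Real.sin (θ / 2) ^ (α - β) *
            (Real.sin ((-(θ * (α - 3)) + Real.pi * α) / 2)
              + (α - 1) * Real.sin ((θ + Real.pi * α - θ * α) / 2))
          / (Real.sin ((-(θ * (β - 3)) + Real.pi * β) / 2)
              + (β - 1) * Real.sin ((θ + Real.pi * β - θ * β) / 2)) := by
  have hs : 0 < Real.sin (θ / 2) :=
    Real.sin_pos_of_pos_of_lt_pi (by linarith) (by linarith [Real.pi_pos])
  set s := Real.sin (θ / 2) with hsdef
  set c := Real.cos (θ / 2) with hcdef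
  set N : ℝ := Real.sin ((-(θ * (α - 3)) + Real.pi * α) / 2)
      + (α - 1) * Real.sin ((θ + Real.pi * α - θ * α) / 2) with hNdef
  set D : ℝ := Real.sin ((-(θ * (β - 3)) + Real.pi * β) / 2)
      + (β - 1) * Real.sin ((θ + Real.pi * β - θ * β) / 2) with hDdef
  -- trig expansions
  have expand : ∀ γ : ℝ,
      Real.sin ((-(θ * (γ - 3)) + Real.pi * γ) / 2)
        + (γ - 1) * Real.sin ((θ + Real.pi * γ - θ * γ) / 2)
      = γ * c * Real.sin (γ * (Real.pi - θ) / 2 + θ)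
        + (2 - γ) * s * Real.cos (γ * (Real.pi - θ) / 2 + θ) := by
    intro γ
    have e1 : (-(θ * (γ - 3)) + Real.pi * γ) / 2 = (γ * (Real.pi - θ) / 2 + θ) + θ / 2 := by ring
    have e2 : (θ + Real.pi * γ - θ * γ) / 2 = (γ * (Real.pi - θ) / 2 + θ) - θ / 2 := by ring
    rw [e1, e2, Real.sin_add, Real.sin_sub]
    rw [hsdef, hcdef]; ring
  have hNα : N = α * c * Real.sin (α * (Real.pi - θ) / 2 + θ)
      + (2 - α) * s * Real.cos (α * (Real.pi - θ) / 2 + θ) := expand α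
  have hDβ : D = β * c * Real.sin (β * (Real.pi - θ) / 2 + θ)
      + (2 - β) * s * Real.cos (β * (Real.pi - θ) / 2 + θ) := expand β
  -- rpow splittings
  have hsα : s ^ α = s ^ (α - 1) * s := by
    have h := Real.rpow_add hs (α - 1) 1
    rw [Real.rpow_one] at h
    rw [← h]; congr 1; ring
  have hsβ : s ^ β = s ^ (β - 1) * s := by
    have h := Real.rpow_add hs (β - 1) 1
    rw [Real.rpow_one] at h
    rw [← h]; congr 1; ring
  have h2α : (2 : ℝ) ^ α = (2 : ℝ) ^ (α - 1) * 2 := by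
    have h := Real.rpow_add (by norm_num : (0:ℝ) < 2) (α - 1) 1
    rw [Real.rpow_one] at h
    rw [← h]; congr 1; ring
  have h2β : (2 : ℝ) ^ β = (2 : ℝ) ^ (β - 1) * 2 := by
    have h := Real.rpow_add (by norm_num : (0:ℝ) < 2) (β - 1) 1
    rw [Real.rpow_one] at h
    rw [← h]; congr 1; ring
  set P := (2:ℝ) ^ (α - 1) with hP
  set Q := (2:ℝ) ^ (β - 1) with hQ
  set U := s ^ (α - 1) with hU
  set V := s ^ (β - 1) with hV
  have hPpos : 0 < P := Real.rpow_pos_of_pos two_pos _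
  have hQpos : 0 < Q := Real.rpow_pos_of_pos two_pos _
  have hUpos : 0 < U := Real.rpow_pos_of_pos hs _
  have hVpos : 0 < V := Real.rpow_pos_of_pos hs _
  -- G factored
  have hG : G a α β θ = P * U * N + a * (Q * V * D) := by
    rw [G, hNα, hDβ, hsα, hsβ, h2α, h2β, ← hsdef, ← hcdef, ← hP, ← hQ, ← hU, ← hV]
    ring
  have h2αβ : (2:ℝ) ^ (α - β) = P / Q := by
    rw [hP, hQ, ← Real.rpow_sub two_pos]; congr 1; ring
  have hsαβ : s ^ (α - β) = U / V := by
    rw [hU, hV, ← Real.rpow_sub hs]; congr 1; ring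
  rw [hG, h2αβ, hsαβ]
  have hBD : Q * V * D ≠ 0 := mul_ne_zero (by positivity) hD
  constructor
  · intro h
    have ha : a = -(P * U * N) / (Q * V * D) := by
      rw [eq_div_iff hBD]; linear_combination h
    rw [ha]
    field_simp
  · intro h
    rw [h]
    field_simp
    ring
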